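/- Let n ≥ 2, θ > 0, and let π₁,...,π_N be i.i.d. samples from the Mallows' φ model P_{θ,id}. Let A_N be the event that some permutation π ∈ S_n with π ≠ id satisfies Σ_{i=1}^N inv(π_i ∘ π⁻¹) ≤ Σ_{i=1}^N inv(π_i). Then for every N ≥ 1, P_{θ,id}(A_N) ≤ (n − H_n) · n! · (cosh(θ/2))^{−N}, where H_n := Σ_{i=1}^n 1/i is the n-th harmonic number. In particular, the maximum likelihood estimator of the central ranking converges to the true center exponentially fast in the sample size N. -/

import Mathlib

open scoped BigOperators Classical

/-- Number of inversions of a permutation of `Fin n`. -/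
def numInv {n : ℕ} (π : Equiv.Perm (Fin n)) : ℕ :=
  (Finset.univ.filter fun p : Fin n × Fin n => p.1 < p.2 ∧ π p.2 < π p.1).card

/-- Mallows' φ model probability mass at `π`, with dispersion `θ` and central ranking `π₀`. -/
noncomputable def mallowsP (n : ℕ) (θ : ℝ) (π₀ π : Equiv.Perm (Fin n)) : ℝ :=
  Real.exp (-θ * numInv (π * π₀⁻¹)) / ∑ σ : Equiv.Perm (Fin n), Real.exp (-θ * numInv σ)

/-- Probability of the event `A` under `N` i.i.d. samples from the Mallows' φ model. -/
noncomputable def probOf (n N : ℕ) (θ : ℝ) (π₀ : Equiv.Perm (Fin n))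
    (A : (Fin N → Equiv.Perm (Fin n)) → Prop) : ℝ :=
  ∑ x ∈ Finset.univ.filter A, ∏ i, mallowsP n θ π₀ (x i)

open Finset

lemma numInv_mul_swap_lt {n : ℕ} (σ : Equiv.Perm (Fin n)) {a b : Fin n}
    (hab : a < b) (hσ : σ a < σ b) :
    numInv σ < numInv (σ * Equiv.swap a b) := by
  classical
  set τ := Equiv.swap a b with hτdef
  have hτa : τ a = b := Equiv.swap_apply_left a b
  have hτb : τ b = a := Equiv.swap_apply_right a b
  have hττ : ∀ k, τ (τ k) = k := fun k => Equiv.swap_apply_self a b k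
  set y := σ * τ with hy
  have hyval : ∀ k, y k = σ (τ k) := fun k => rfl
  unfold numInv
  set s := Finset.univ.filter fun p : Fin n × Fin n => p.1 < p.2 ∧ σ p.2 < σ p.1 with hs
  set t := Finset.univ.filter fun p : Fin n × Fin n => p.1 < p.2 ∧ y p.2 < y p.1 with ht
  have hmem : (a, b) ∈ t := by
    simp only [ht, Finset.mem_filter, Finset.mem_univ, true_and]
    exact ⟨hab, by simpa [hyval, hτa, hτb] using hσ⟩
  have hcard : s.card ≤ (t.erase (a, b)).card := by
    apply Finset.card_le_card_of_injOn
      (fun p => if τ p.1 < τ p.2 then (τ p.1, τ p.2) else p)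
    · intro p hp
      simp only [Finset.mem_coe, hs, Finset.mem_filter, Finset.mem_univ, true_and] at hp ⊢
      obtain ⟨h12, h21⟩ := hp
      have hpne : p ≠ (a, b) := by
        rintro rfl; exact absurd hσ (not_lt.mpr h21.le)
      split_ifs with hlt
      · refine Finset.mem_erase.mpr ⟨?_, ?_⟩
        · rintro heq
          have e1 : τ p.1 = a := congrArg Prod.fst heq
          have e2 : τ p.2 = b := congrArg Prod.snd heq
          have hb1 : p.1 = b := by rw [← hττ p.1, e1, hτa]
          have ha2 : p.2 = a := by rw [← hττ p.2, e2, hτb]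
          rw [hb1, ha2] at h12
          exact absurd (h12.trans hab) (lt_irrefl b)
        · simp only [ht, Finset.mem_filter, Finset.mem_univ, true_and]
          exact ⟨hlt, by simpa [hyval, hττ] using h21⟩
      · refine Finset.mem_erase.mpr ⟨hpne, ?_⟩
        simp only [ht, Finset.mem_filter, Finset.mem_univ, true_and]
        refine ⟨h12, ?_⟩
        have hne12 : p.1 ≠ p.2 := ne_of_lt h12
        have hτne : τ p.2 ≠ τ p.1 := fun h => hne12 (τ.injective h).symm
        have hgt : τ p.2 < τ p.1 := lt_of_le_of_ne (not_lt.mp hlt) hτne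
        simp only [hyval]
        by_cases h1a : p.1 = a
        · by_cases h2b : p.2 = b
          · exact absurd hσ (not_lt.mpr (h1a ▸ h2b ▸ h21).le)
          · have h2a : p.2 ≠ a := fun h => hne12 (h1a.trans h.symm)
            have hτ2 : τ p.2 = p.2 := Equiv.swap_apply_of_ne_of_ne h2a h2b
            rw [h1a, hτa, hτ2]
            exact lt_trans (h1a ▸ h21) hσ
        · by_cases h1b : p.1 = b
          · -- p.1 = b, p.2 > b so p.2 ∉ {a,b}; τ p.1 = a, contradiction with hgt
            have h2b : p.2 ≠ b := fun h => hne12 (h1b.trans h.symm)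
            have h2a : p.2 ≠ a := ne_of_gt (lt_trans hab (h1b ▸ h12))
            have hτ2 : τ p.2 = p.2 := Equiv.swap_apply_of_ne_of_ne h2a h2b
            rw [h1b, hτb, hτ2] at hgt
            exact absurd (lt_trans (lt_trans hgt hab) (h1b ▸ h12)) (lt_irrefl _)
          · have hτ1 : τ p.1 = p.1 := Equiv.swap_apply_of_ne_of_ne h1a h1b
            by_cases h2a : p.2 = a
            · -- p.1 < a, τ p.2 = b, hgt : b < p.1 < a < b contra
              rw [h2a, hτa, hτ1] at hgt
              exact absurd (lt_trans (lt_trans hgt h12) (h2a ▸ hab)) (lt_irrefl _)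
            · by_cases h2b : p.2 = b
              · rw [h2b, hτb, hτ1]
                exact lt_trans hσ (h2b ▸ h21)
              · have hτ2 : τ p.2 = p.2 := Equiv.swap_apply_of_ne_of_ne h2a h2b
                rw [hτ1, hτ2] at hgt
                exact absurd h12 (not_lt.mpr hgt.le)
    · intro p hp q hq heq
      simp only [Finset.mem_coe, hs, Finset.mem_filter, Finset.mem_univ, true_and] at hp hq
      simp only at heq
      split_ifs at heq with h1 h2 h2
      · exact Prod.ext (τ.injective (congrArg Prod.fst heq))
          (τ.injective (congrArg Prod.snd heq))
      · exfalso
        have e1 : τ p.1 = q.1 := congrArg Prod.fst heq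
        have e2 : τ p.2 = q.2 := congrArg Prod.snd heq
        apply h2
        rw [← e1, ← e2, hττ, hττ]
        exact hp.1
      · exfalso
        have e1 : p.1 = τ q.1 := congrArg Prod.fst heq
        have e2 : p.2 = τ q.2 := congrArg Prod.snd heq
        apply h1
        rw [e1, e2, hττ, hττ]
        exact hq.1
      · exact heq
  calc s.card ≤ (t.erase (a, b)).card := hcard
    _ < t.card := Finset.card_erase_lt_of_mem hmem


lemma numInv_mul_inv_eq {n : ℕ} (x π : Equiv.Perm (Fin n)) :
    numInv (x * π⁻¹) = (Finset.univ.filter fun p : Fin n × Fin n =>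
      π p.1 < π p.2 ∧ x p.2 < x p.1).card := by
  classical
  unfold numInv
  apply Finset.card_bij' (fun p _ => (π⁻¹ p.1, π⁻¹ p.2)) (fun q _ => (π q.1, π q.2))
  · intro p hp
    simp only [Finset.mem_filter, Finset.mem_univ, true_and] at hp ⊢
    constructor
    · simpa using hp.1
    · simpa [Equiv.Perm.mul_apply] using hp.2
  · intro q hq
    simp only [Finset.mem_filter, Finset.mem_univ, true_and] at hq ⊢
    constructor
    · simpa using hq.1
    · simpa [Equiv.Perm.mul_apply] using hq.2
  · intro p _; simp
  · intro q _; simp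

lemma sum_numInv_eq {n N : ℕ} (x : Fin N → Equiv.Perm (Fin n)) (π : Equiv.Perm (Fin n)) :
    ∑ i, numInv (x i * π⁻¹)
      = ∑ p ∈ Finset.univ.filter (fun p : Fin n × Fin n => π p.1 < π p.2),
          (Finset.univ.filter fun i => x i p.2 < x i p.1).card := by
  classical
  have h1 : ∀ i, numInv (x i * π⁻¹)
      = ∑ p ∈ Finset.univ.filter (fun p : Fin n × Fin n => π p.1 < π p.2),
          (if x i p.2 < x i p.1 then 1 else 0) := by
    intro i
    rw [numInv_mul_inv_eq, ← Finset.filter_filter, Finset.card_filter]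
  simp_rw [h1]
  rw [Finset.sum_comm]
  exact Finset.sum_congr rfl fun p _ => (Finset.card_filter _ _).symm

lemma strictMono_perm_eq_one {n : ℕ} (π : Equiv.Perm (Fin n)) (h : StrictMono ⇑π) : π = 1 := by
  have hinv : StrictMono ⇑π⁻¹ := by
    intro u v huv
    by_contra hc
    have : π⁻¹ v ≤ π⁻¹ u := not_lt.mp hc
    have : v ≤ u := by
      have := h.le_iff_le.mpr this
      simpa using this
    exact absurd huv (not_lt.mpr this)
  have key : ∀ (g : Equiv.Perm (Fin n)), StrictMono ⇑g → ∀ k : ℕ, ∀ hk : k < n,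
      k ≤ (g ⟨k, hk⟩ : ℕ) := by
    intro g hg k
    induction k with
    | zero => intro hk; exact Nat.zero_le _
    | succ m ih =>
      intro hk
      have hm : m < n := Nat.lt_of_succ_lt hk
      have h1 : g ⟨m, hm⟩ < g ⟨m + 1, hk⟩ := hg (by simp [Fin.lt_def])
      have h2 : (m : ℕ) ≤ (g ⟨m, hm⟩ : ℕ) := ih hm
      have : (g ⟨m, hm⟩ : ℕ) < (g ⟨m + 1, hk⟩ : ℕ) := h1
      omega
  apply Equiv.ext
  intro i
  have h1 : (i : ℕ) ≤ (π i : ℕ) := by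
    have := key π h i.1 i.2
    simpa using this
  have h2 : ((π i : Fin n) : ℕ) ≤ ((π⁻¹ (π i) : Fin n) : ℕ) := by
    have := key π⁻¹ hinv (π i).1 (π i).2
    simpa using this
  rw [show π⁻¹ (π i) = i from π.symm_apply_apply i] at h2
  simp only [Equiv.Perm.one_apply]
  exact Fin.ext (le_antisymm h2 h1)

lemma exists_desc_of_ne_one {n : ℕ} (π : Equiv.Perm (Fin n)) (h : π ≠ 1) :
    ∃ a b : Fin n, a < b ∧ π b < π a := by
  by_contra hc
  push_neg at hc
  apply h
  apply strictMono_perm_eq_one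
  intro a b hab
  rcases lt_trichotomy (π a) (π b) with h' | h' | h'
  · exact h'
  · exact absurd (π.injective h') (ne_of_lt hab)
  · exact absurd h' (not_lt.mpr (hc a b hab))

lemma sum_lt_of_allgood {n N : ℕ} (x : Fin N → Equiv.Perm (Fin n)) (π : Equiv.Perm (Fin n))
    (hπ : π ≠ 1)
    (hgood : ∀ a b : Fin n, a < b →
      (Finset.univ.filter fun i => x i b < x i a).card
        < (Finset.univ.filter fun i => x i a < x i b).card) :
    ∑ i, numInv (x i) < ∑ i, numInv (x i * π⁻¹) := by
  classical
  have hid : ∑ i, numInv (x i) = ∑ i, numInv (x i * (1 : Equiv.Perm (Fin n))⁻¹) := by simp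
  rw [hid, sum_numInv_eq, sum_numInv_eq]
  set D : Fin n × Fin n → ℕ :=
    fun p => (Finset.univ.filter fun i => x i p.2 < x i p.1).card with hD
  -- split both sums by whether p.1 < p.2
  rw [← Finset.sum_filter_add_sum_filter_not
      (Finset.univ.filter fun p : Fin n × Fin n => π p.1 < π p.2)
      (fun p => p.1 < p.2) D,
    ← Finset.sum_filter_add_sum_filter_not
      (Finset.univ.filter fun p : Fin n × Fin n => (1 : Equiv.Perm (Fin n)) p.1 <
        (1 : Equiv.Perm (Fin n)) p.2)
      (fun p => π p.1 < π p.2) D]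
  simp only [Equiv.Perm.one_apply, Finset.filter_filter]
  have e1 : (Finset.univ.filter fun p : Fin n × Fin n => p.1 < p.2 ∧ π p.1 < π p.2)
      = (Finset.univ.filter fun p : Fin n × Fin n => π p.1 < π p.2 ∧ p.1 < p.2) := by
    apply Finset.filter_congr; intro p _; exact and_comm
  refine lt_of_eq_of_lt (congrArg (· + _) (Finset.sum_congr (s₂ := Finset.univ.filter fun p : Fin n × Fin n => π p.1 < π p.2 ∧ p.1 < p.2) (by ext p; simp only [Finset.mem_filter, Finset.mem_univ, true_and]; exact ⟨fun h => ⟨h.2, (Finset.mem_filter.mp h.1).2⟩, fun h => ⟨Finset.mem_filter.mpr ⟨Finset.mem_univ _, h.2⟩, h.1⟩⟩) fun _ _ => rfl)) ?_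
  apply add_lt_add_right
  -- second pieces
  have e2 : (Finset.univ.filter fun p : Fin n × Fin n => π p.1 < π p.2 ∧ ¬ p.1 < p.2)
      = (Finset.univ.filter fun p : Fin n × Fin n => p.1 < p.2 ∧ π p.2 < π p.1).image
          Prod.swap := by
    ext p
    simp only [Finset.mem_filter, Finset.mem_univ, true_and, Finset.mem_image]
    constructor
    · rintro ⟨h1, h2⟩
      refine ⟨p.swap, ⟨?_, by simpa using h1⟩, by simp⟩
      have hne : p.1 ≠ p.2 := fun h => by simp [h] at h1
      simp only [Prod.fst_swap, Prod.snd_swap]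
      exact lt_of_le_of_ne (not_lt.mp h2) hne.symm
    · rintro ⟨q, ⟨hq1, hq2⟩, rfl⟩
      exact ⟨by simpa using hq2, by simpa using not_lt.mpr hq1.le⟩
  rw [e2, Finset.sum_image (by
    intro p _ q _ h
    exact Prod.swap_injective h)]
  have e3 : (Finset.univ.filter fun p : Fin n × Fin n => p.1 < p.2 ∧ ¬ π p.1 < π p.2)
      = (Finset.univ.filter fun p : Fin n × Fin n => p.1 < p.2 ∧ π p.2 < π p.1) := by
    apply Finset.filter_congr; intro p _
    constructor
    · rintro ⟨h1, h2⟩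
      refine ⟨h1, ?_⟩
      have hne : π p.1 ≠ π p.2 := fun h => (ne_of_lt h1) (π.injective h)
      exact lt_of_le_of_ne (not_lt.mp h2) hne.symm
    · rintro ⟨h1, h2⟩
      exact ⟨h1, not_lt.mpr h2.le⟩
  refine lt_of_eq_of_lt (Finset.sum_congr (s₂ := Finset.univ.filter fun p : Fin n × Fin n => p.1 < p.2 ∧ π p.2 < π p.1) (by rw [← e3]; ext p; simp only [Finset.mem_filter, Finset.mem_univ, true_and]; exact ⟨fun h => ⟨(Finset.mem_filter.mp h.1).2, h.2⟩, fun h => ⟨Finset.mem_filter.mpr ⟨Finset.mem_univ _, h.1⟩, h.2⟩⟩) fun _ _ => rfl) ?_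
  apply Finset.sum_lt_sum_of_nonempty
  · obtain ⟨a, b, hab, hba⟩ := exists_desc_of_ne_one π hπ
    exact ⟨(a, b), by simp [hab, hba]⟩
  · intro p hp
    simp only [Finset.mem_filter, Finset.mem_univ, true_and] at hp
    simpa [hD] using hgood p.1 p.2 hp.1


lemma core_exp_ineq {θ : ℝ} (hθ : 0 < θ) {k k' : ℕ} (hk : k < k') :
    Real.exp (-θ * k) * Real.exp ((θ / 2) * (-1)) +
      Real.exp (-θ * k') * Real.exp ((θ / 2) * 1) ≤
    (Real.exp (-θ * k) + Real.exp (-θ * k')) / Real.cosh (θ / 2) := by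
  have hcosh : 0 < Real.cosh (θ / 2) := Real.cosh_pos _
  rw [le_div_iff₀ hcosh]
  set u := Real.exp (θ / 2) with hu
  set v := Real.exp (-(θ / 2)) with hv
  have huv : u * v = 1 := by rw [hu, hv, ← Real.exp_add]; simp
  have hu1 : 1 ≤ u := Real.one_le_exp (by linarith)
  have hv0 : 0 < v := Real.exp_pos _
  have hA0 : 0 < Real.exp (-θ * k) := Real.exp_pos _
  set A := Real.exp (-θ * k) with hA
  set B := Real.exp (-θ * k') with hB
  have hBA : B ≤ A * (v * v) := by
    rw [hA, hB, hv, ← Real.exp_add, ← Real.exp_add]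
    apply Real.exp_le_exp.mpr
    have : (k : ℝ) + 1 ≤ (k' : ℝ) := by exact_mod_cast hk
    nlinarith
  have hcosh_eq : Real.cosh (θ / 2) = (u + v) / 2 := by
    rw [Real.cosh_eq, hu, hv]
  rw [hcosh_eq]
  have he1 : (θ / 2) * (-1) = -(θ/2) := by ring
  have he2 : (θ / 2) * 1 = θ / 2 := by ring
  rw [he1, he2, ← hv, ← hu]
  have hu2 : (0:ℝ) ≤ u * u - 1 := by nlinarith
  have hmul := mul_le_mul_of_nonneg_right hBA hu2
  have hAvu : A * (v * v) * (u * u) = A := by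
    calc A * (v * v) * (u * u) = A * ((u * v) * (u * v)) := by ring
    _ = A := by rw [huv]; ring
  have key : A * (v * v) + B * (u * u) ≤ A + B := by nlinarith
  calc (A * v + B * u) * ((u + v) / 2)
      = (A * (u * v) + (A * (v * v) + B * (u * u)) + B * (u * v)) / 2 := by ring
    _ = (A + (A * (v * v) + B * (u * u)) + B) / 2 := by rw [huv]; ring
    _ ≤ A + B := by linarith

lemma mgf_le {n : ℕ} {θ : ℝ} (hθ : 0 < θ) {a b : Fin n} (hab : a < b) :
    ∑ σ : Equiv.Perm (Fin n),
      Real.exp (-θ * numInv σ) * Real.exp ((θ/2) * (if σ b < σ a then (1:ℝ) else -1))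
      ≤ (∑ σ : Equiv.Perm (Fin n), Real.exp (-θ * numInv σ)) / Real.cosh (θ/2) := by
  classical
  set τ := Equiv.swap a b with hτ
  set F : Equiv.Perm (Fin n) → ℝ := fun σ =>
    Real.exp (-θ * numInv σ) * Real.exp ((θ/2) * (if σ b < σ a then (1:ℝ) else -1)) with hF
  set G : Equiv.Perm (Fin n) → ℝ := fun σ => Real.exp (-θ * numInv σ) with hG
  have hpt : ∀ σ : Equiv.Perm (Fin n), σ a < σ b →
      F σ + F (σ * τ) ≤ (G σ + G (σ * τ)) / Real.cosh (θ/2) := by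
    intro σ hσ
    have h1 : ¬ (σ b < σ a) := not_lt.mpr hσ.le
    have h2 : (σ * τ) b < (σ * τ) a := by
      simp only [Equiv.Perm.mul_apply, hτ, Equiv.swap_apply_left, Equiv.swap_apply_right]
      exact hσ
    have hk := numInv_mul_swap_lt σ hab hσ
    simp only [hF, hG, if_neg h1, if_pos h2]
    exact core_exp_ineq hθ hk
  have hpt' : ∀ σ, F σ + F (σ * τ) ≤ (G σ + G (σ * τ)) / Real.cosh (θ/2) := by
    intro σ
    have hne : σ a ≠ σ b := fun h => (ne_of_lt hab) (σ.injective h)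
    rcases lt_or_gt_of_ne hne with h | h
    · exact hpt σ h
    · have h2 : (σ * τ) a < (σ * τ) b := by
        simp only [Equiv.Perm.mul_apply, hτ, Equiv.swap_apply_left, Equiv.swap_apply_right]
        exact h
      have hres := hpt (σ * τ) h2
      have hττ : σ * τ * τ = σ := by
        rw [mul_assoc, hτ, Equiv.swap_mul_self, mul_one]
      rw [hττ] at hres
      calc F σ + F (σ * τ) = F (σ * τ) + F σ := by ring
        _ ≤ (G (σ * τ) + G σ) / Real.cosh (θ/2) := hres
        _ = (G σ + G (σ * τ)) / Real.cosh (θ/2) := by ring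
  have hsum : ∑ σ, F (σ * τ) = ∑ σ, F σ := Equiv.sum_comp (Equiv.mulRight τ) F
  have h2 : 2 * ∑ σ, F σ = ∑ σ, (F σ + F (σ * τ)) := by
    rw [Finset.sum_add_distrib, hsum]; ring
  have h3 : ∑ σ, (F σ + F (σ * τ)) ≤ ∑ σ, (G σ + G (σ * τ)) / Real.cosh (θ/2) :=
    Finset.sum_le_sum fun σ _ => hpt' σ
  have hsumG : ∑ σ, G (σ * τ) = ∑ σ, G σ := Equiv.sum_comp (Equiv.mulRight τ) G
  have h4 : ∑ σ, (G σ + G (σ * τ)) / Real.cosh (θ/2)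
      = 2 * ((∑ σ, G σ) / Real.cosh (θ/2)) := by
    rw [← Finset.sum_div, Finset.sum_add_distrib, hsumG]; ring
  linarith [h2, h3, h4]


lemma psi_pos {n : ℕ} (θ : ℝ) :
    0 < ∑ σ : Equiv.Perm (Fin n), Real.exp (-θ * numInv σ) :=
  Finset.sum_pos (fun _ _ => Real.exp_pos _) Finset.univ_nonempty

lemma mallowsP_nonneg {n : ℕ} (θ : ℝ) (π₀ π : Equiv.Perm (Fin n)) :
    0 ≤ mallowsP n θ π₀ π :=
  div_nonneg (Real.exp_nonneg _) (psi_pos θ).le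

lemma mallowsP_one {n : ℕ} (θ : ℝ) (π : Equiv.Perm (Fin n)) :
    mallowsP n θ 1 π = Real.exp (-θ * numInv π) /
      ∑ σ : Equiv.Perm (Fin n), Real.exp (-θ * numInv σ) := by
  simp [mallowsP]

lemma zsum_eq {n N : ℕ} {a b : Fin n} (hab : a < b) (x : Fin N → Equiv.Perm (Fin n)) :
    ∑ i, (if x i b < x i a then (1:ℝ) else -1)
      = ((Finset.univ.filter fun i => x i b < x i a).card : ℝ)
        - ((Finset.univ.filter fun i => x i a < x i b).card : ℝ) := by
  have h1 : ∀ i, (if x i b < x i a then (1:ℝ) else -1)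
      = (if x i b < x i a then (1:ℝ) else 0) - (if x i a < x i b then (1:ℝ) else 0) := by
    intro i
    have hne : x i a ≠ x i b := fun h => (ne_of_lt hab) ((x i).injective h)
    by_cases hc : x i b < x i a
    · rw [if_pos hc, if_pos hc, if_neg (not_lt.mpr hc.le)]; ring
    · have h' : x i a < x i b := lt_of_le_of_ne (not_lt.mp hc) hne
      rw [if_neg hc, if_neg hc, if_pos h']; ring
  simp_rw [h1]
  rw [Finset.sum_sub_distrib, Finset.sum_boole, Finset.sum_boole]

lemma pair_prob_le {n N : ℕ} {θ : ℝ} (hθ : 0 < θ) {a b : Fin n} (hab : a < b) :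
    probOf n N θ 1 (fun x => (Finset.univ.filter fun i => x i a < x i b).card ≤
        (Finset.univ.filter fun i => x i b < x i a).card)
      ≤ (1 / Real.cosh (θ/2)) ^ N := by
  classical
  set Ψ := ∑ σ : Equiv.Perm (Fin n), Real.exp (-θ * numInv σ) with hΨdef
  have hΨ : 0 < Ψ := psi_pos θ
  set z : Equiv.Perm (Fin n) → ℝ := fun σ => if σ b < σ a then (1:ℝ) else -1 with hz
  set f : Equiv.Perm (Fin n) → ℝ :=
    fun σ => Real.exp (-θ * numInv σ) / Ψ * Real.exp ((θ/2) * z σ) with hf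
  have hf0 : ∀ σ, 0 ≤ f σ :=
    fun σ => mul_nonneg (div_nonneg (Real.exp_nonneg _) hΨ.le) (Real.exp_nonneg _)
  have hstep1 : probOf n N θ 1 (fun x =>
      (Finset.univ.filter fun i => x i a < x i b).card ≤
        (Finset.univ.filter fun i => x i b < x i a).card)
      ≤ ∑ x : Fin N → Equiv.Perm (Fin n), ∏ i, f (x i) := by
    unfold probOf
    apply le_trans (Finset.sum_le_sum ?_)
      (Finset.sum_le_sum_of_subset_of_nonneg (Finset.subset_univ _) ?_)
    · intro x hx
      simp only [Finset.mem_filter, Finset.mem_univ, true_and] at hx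
      have hzsum : (0:ℝ) ≤ ∑ i, z (x i) := by
        rw [hz]
        rw [zsum_eq hab x]
        have := hx
        have hcast : ((Finset.univ.filter fun i => x i a < x i b).card : ℝ)
            ≤ ((Finset.univ.filter fun i => x i b < x i a).card : ℝ) := by exact_mod_cast hx
        linarith
      have hexp1 : (1:ℝ) ≤ Real.exp ((θ/2) * ∑ i, z (x i)) := by
        apply Real.one_le_exp
        positivity
      calc ∏ i, mallowsP n θ 1 (x i)
          ≤ (∏ i, mallowsP n θ 1 (x i)) * Real.exp ((θ/2) * ∑ i, z (x i)) := by
            nth_rewrite 1 [← mul_one (∏ i, mallowsP n θ 1 (x i))]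
            exact mul_le_mul_of_nonneg_left hexp1
              (Finset.prod_nonneg fun i _ => mallowsP_nonneg θ 1 (x i))
        _ = ∏ i, f (x i) := by
            rw [Finset.mul_sum, Real.exp_sum, ← Finset.prod_mul_distrib]
            exact Finset.prod_congr rfl fun i _ => by rw [mallowsP_one, hf]
    · intro x _ _
      exact Finset.prod_nonneg fun i _ => hf0 (x i)
  have hstep2 : ∑ x : Fin N → Equiv.Perm (Fin n), ∏ i, f (x i) = (∑ σ, f σ) ^ N :=
    (Fintype.sum_pow f N).symm
  have hstep3 : ∑ σ, f σ ≤ 1 / Real.cosh (θ/2) := by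
    have heq : ∑ σ, f σ
        = (∑ σ : Equiv.Perm (Fin n),
            Real.exp (-θ * numInv σ) * Real.exp ((θ/2) * z σ)) / Ψ := by
      rw [Finset.sum_div]
      refine Finset.sum_congr rfl fun σ _ => ?_
      show Real.exp (-θ * numInv σ) / Ψ * Real.exp ((θ/2) * z σ)
        = Real.exp (-θ * numInv σ) * Real.exp ((θ/2) * z σ) / Ψ
      ring
    rw [heq, div_le_div_iff₀ hΨ (by positivity)]
    have := mgf_le hθ hab
    calc (∑ σ : Equiv.Perm (Fin n), Real.exp (-θ * numInv σ) * Real.exp ((θ/2) * z σ)) * Real.cosh (θ/2)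
        ≤ (Ψ / Real.cosh (θ/2)) * Real.cosh (θ/2) := by
          apply mul_le_mul_of_nonneg_right _ (Real.cosh_pos _).le
          exact this
      _ = 1 * Ψ := by field_simp
  rw [hstep2] at hstep1
  refine le_trans hstep1 (pow_le_pow_left₀ ?_ hstep3 N)
  exact Finset.sum_nonneg fun σ _ => hf0 σ


lemma card_lt_pairs {n : ℕ} :
    2 * ((Finset.univ.filter fun p : Fin n × Fin n => p.1 < p.2).card) + n = n * n := by
  classical
  have hlg : (Finset.univ.filter fun p : Fin n × Fin n => p.1 < p.2).card
      = (Finset.univ.filter fun p : Fin n × Fin n => p.2 < p.1).card := by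
    apply Finset.card_nbij' (fun p => Prod.swap p) (fun p => Prod.swap p)
    · intro p hp; simp only [Finset.mem_filter, Finset.mem_univ, true_and] at hp ⊢; simpa using hp
    · intro p hp; simp only [Finset.mem_filter, Finset.mem_univ, true_and] at hp ⊢; simpa using hp
    · intro p _; simp
    · intro p _; simp
  have h1 := Finset.card_filter_add_card_filter_not
    (s := (Finset.univ : Finset (Fin n × Fin n))) (p := fun p => p.1 < p.2)
  have h2 := Finset.card_filter_add_card_filter_not
    (s := Finset.univ.filter fun p : Fin n × Fin n => ¬ p.1 < p.2)
    (p := fun p : Fin n × Fin n => p.2 < p.1)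
  have e1 : ((Finset.univ.filter fun p : Fin n × Fin n => ¬ p.1 < p.2).filter
      fun p : Fin n × Fin n => p.2 < p.1)
      = Finset.univ.filter fun p : Fin n × Fin n => p.2 < p.1 := by
    rw [Finset.filter_filter]
    apply Finset.filter_congr
    intro p _
    constructor
    · rintro ⟨_, h⟩; exact h
    · intro h; exact ⟨not_lt.mpr h.le, h⟩
  have e2 : ((Finset.univ.filter fun p : Fin n × Fin n => ¬ p.1 < p.2).filter
      fun p : Fin n × Fin n => ¬ p.2 < p.1)
      = Finset.univ.filter fun p : Fin n × Fin n => p.1 = p.2 := by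
    rw [Finset.filter_filter]
    apply Finset.filter_congr
    intro p _
    constructor
    · rintro ⟨h1', h2'⟩; exact le_antisymm (not_lt.mp h2') (not_lt.mp h1')
    · intro h; exact ⟨by rw [h]; exact lt_irrefl _, by rw [h]; exact lt_irrefl _⟩
  have e3 : (Finset.univ.filter fun p : Fin n × Fin n => p.1 = p.2).card = n := by
    rw [show (Finset.univ.filter fun p : Fin n × Fin n => p.1 = p.2)
        = (Finset.univ : Finset (Fin n)).image (fun a => (a, a)) from ?_]
    · rw [Finset.card_image_of_injective _ (fun a b h => (Prod.mk.injEq _ _ _ _).mp h |>.1)]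
      simp
    · ext p
      simp only [Finset.mem_filter, Finset.mem_univ, true_and, Finset.mem_image]
      constructor
      · intro h
        refine ⟨p.1, ?_⟩
        rw [Prod.ext_iff]
        exact ⟨rfl, h⟩
      · rintro ⟨a, _, rfl⟩; rfl
  have e4 : (Finset.univ : Finset (Fin n × Fin n)).card = n * n := by
    simp [Finset.card_univ]
  rw [e1, e2, e3] at h2
  rw [e4, ← h2, ← hlg] at h1
  omega

lemma harm_le (m : ℕ) (hm : 1 ≤ m) :
    ∑ i ∈ Finset.range m, (1:ℝ) / (i + 1) ≤ ((m : ℝ) + 1) / 2 := by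
  induction m with
  | zero => omega
  | succ k ih =>
    rcases Nat.eq_or_lt_of_le hm with h | h
    · rw [← h]
      norm_num
    · have hk : 1 ≤ k := by omega
      rw [Finset.sum_range_succ]
      have h2 : (1:ℝ) / ((k : ℝ) + 1) ≤ 1 / 2 := by
        apply one_div_le_one_div_of_le (by norm_num : (0:ℝ) < 2)
        have : (2:ℕ) ≤ k + 1 := by omega
        exact_mod_cast this
      have := ih hk
      push_cast
      push_cast at this
      linarith

/-- exponential upper bound on the probability that some permutation other
than the true center `id` achieves a total-inversions value no larger than that of `id`:
`P(A_N) ≤ (n − H_n) · n! · (cosh(θ/2))^{−N}` for every `N ≥ 1`, where `H_n` is the `n`-th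
harmonic number. -/
theorem mallows_center_mle_misidentification_upper_bound
    (n : ℕ) (hn : 2 ≤ n) (θ : ℝ) (hθ : 0 < θ) (N : ℕ) (hN : 1 ≤ N) :
    probOf n N θ 1 (fun x => ∃ π : Equiv.Perm (Fin n), π ≠ 1 ∧
        ∑ i, numInv (x i * π⁻¹) ≤ ∑ i, numInv (x i)) ≤
      ((n : ℝ) - ∑ i ∈ Finset.range n, (1 : ℝ) / (i + 1)) * (n.factorial : ℝ) *
        (Real.cosh (θ / 2)) ^ (-(N : ℤ)) := by
  classical
  have hW0 : ∀ x : Fin N → Equiv.Perm (Fin n), 0 ≤ ∏ i, mallowsP n θ 1 (x i) :=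
    fun x => Finset.prod_nonneg fun i _ => mallowsP_nonneg θ 1 (x i)
  set pairs := (Finset.univ : Finset (Fin n × Fin n)).filter (fun p => p.1 < p.2) with hpairs
  set C : (Fin n × Fin n) → (Fin N → Equiv.Perm (Fin n)) → Prop := fun p x =>
    (Finset.univ.filter fun i => x i p.1 < x i p.2).card ≤
      (Finset.univ.filter fun i => x i p.2 < x i p.1).card with hC
  set A : (Fin N → Equiv.Perm (Fin n)) → Prop := fun x =>
    ∃ π : Equiv.Perm (Fin n), π ≠ 1 ∧ ∑ i, numInv (x i * π⁻¹) ≤ ∑ i, numInv (x i) with hA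
  have hcover : ∀ x, A x → ∃ p ∈ pairs, C p x := by
    intro x hx
    obtain ⟨π, hπ1, hπ2⟩ := hx
    by_contra hc
    push_neg at hc
    have hgood : ∀ a b : Fin n, a < b →
        (Finset.univ.filter fun i => x i b < x i a).card
          < (Finset.univ.filter fun i => x i a < x i b).card := by
      intro a b hab
      have h := hc (a, b) (by simp [hpairs, hab])
      rw [hC] at h
      simpa using not_le.mp h
    exact absurd hπ2 (not_le.mpr (sum_lt_of_allgood x π hπ1 hgood))
  have hub : probOf n N θ 1 A ≤ ∑ p ∈ pairs, probOf n N θ 1 (C p) := by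
    have hstep1 : ∀ x ∈ (Finset.univ : Finset (Fin N → Equiv.Perm (Fin n))).filter A,
        (∏ i, mallowsP n θ 1 (x i))
          ≤ ∑ p ∈ pairs, (if C p x then ∏ i, mallowsP n θ 1 (x i) else 0) := by
      intro x hx
      simp only [Finset.mem_filter, Finset.mem_univ, true_and] at hx
      obtain ⟨p₀, hp₀, hCp₀⟩ := hcover x hx
      have h := Finset.single_le_sum
        (f := fun p => if C p x then ∏ i, mallowsP n θ 1 (x i) else 0)
        (fun p _ => by split_ifs; exacts [hW0 x, le_rfl]) hp₀
      rwa [if_pos hCp₀] at h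
    calc probOf n N θ 1 A
        = ∑ x ∈ (Finset.univ : Finset (Fin N → Equiv.Perm (Fin n))).filter A,
            ∏ i, mallowsP n θ 1 (x i) := by rw [probOf]; congr
      _ ≤ ∑ x ∈ (Finset.univ : Finset (Fin N → Equiv.Perm (Fin n))).filter A,
            ∑ p ∈ pairs, (if C p x then ∏ i, mallowsP n θ 1 (x i) else 0) :=
          Finset.sum_le_sum hstep1
      _ = ∑ p ∈ pairs, ∑ x ∈ (Finset.univ : Finset (Fin N → Equiv.Perm (Fin n))).filter A,
            (if C p x then ∏ i, mallowsP n θ 1 (x i) else 0) := Finset.sum_comm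
      _ ≤ ∑ p ∈ pairs, ∑ x : Fin N → Equiv.Perm (Fin n),
            (if C p x then ∏ i, mallowsP n θ 1 (x i) else 0) := by
          apply Finset.sum_le_sum
          intro p _
          apply Finset.sum_le_sum_of_subset_of_nonneg (Finset.subset_univ _)
          intro x _ _
          split_ifs
          exacts [hW0 x, le_rfl]
      _ = ∑ p ∈ pairs, probOf n N θ 1 (C p) := by
          refine Finset.sum_congr rfl fun p _ => ?_
          rw [probOf, ← Finset.sum_filter]
          congr
  have hpair : ∀ p ∈ pairs, probOf n N θ 1 (C p) ≤ (1 / Real.cosh (θ/2)) ^ N := by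
    intro p hp
    have hab : p.1 < p.2 := by
      rw [hpairs] at hp
      simpa using hp
    exact pair_prob_le hθ hab
  have hsum2 : ∑ p ∈ pairs, probOf n N θ 1 (C p)
      ≤ (pairs.card : ℝ) * (1 / Real.cosh (θ/2)) ^ N := by
    calc ∑ p ∈ pairs, probOf n N θ 1 (C p)
        ≤ ∑ _p ∈ pairs, (1 / Real.cosh (θ/2)) ^ N := Finset.sum_le_sum hpair
      _ = (pairs.card : ℝ) * (1 / Real.cosh (θ/2)) ^ N := by
          rw [Finset.sum_const, nsmul_eq_mul]
  have hcoshpos : 0 < Real.cosh (θ/2) := Real.cosh_pos _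
  have hzpow : (1 / Real.cosh (θ/2)) ^ N = Real.cosh (θ/2) ^ (-(N : ℤ)) := by
    rw [zpow_neg, zpow_natCast, one_div, inv_pow]
  have hcard : (pairs.card : ℝ)
      ≤ ((n : ℝ) - ∑ i ∈ Finset.range n, (1 : ℝ) / (i + 1)) * (n.factorial : ℝ) := by
    have h2c : 2 * pairs.card + n = n * n := card_lt_pairs
    have hH := harm_le n (by omega)
    have hfact : (n : ℝ) ≤ (n.factorial : ℝ) := by exact_mod_cast Nat.self_le_factorial n
    have hn2 : (2 : ℝ) ≤ (n : ℝ) := by exact_mod_cast hn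
    have hHn : ((n : ℝ) - 1) / 2 ≤ (n : ℝ) - ∑ i ∈ Finset.range n, (1 : ℝ) / (i + 1) := by
      linarith
    have hc' : (pairs.card : ℝ) = ((n : ℝ) * (n : ℝ) - (n : ℝ)) / 2 := by
      have := congrArg (fun m : ℕ => (m : ℝ)) h2c
      push_cast at this
      linarith
    rw [hc']
    have h0 : (0 : ℝ) ≤ ((n : ℝ) - 1) / 2 := by linarith
    calc ((n : ℝ) * (n : ℝ) - (n : ℝ)) / 2 = (((n : ℝ) - 1) / 2) * (n : ℝ) := by ring
      _ ≤ ((n : ℝ) - ∑ i ∈ Finset.range n, (1 : ℝ) / (i + 1)) * (n.factorial : ℝ) := by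
          apply mul_le_mul hHn hfact (by positivity) (le_trans h0 hHn)
  calc probOf n N θ 1 A ≤ ∑ p ∈ pairs, probOf n N θ 1 (C p) := hub
    _ ≤ (pairs.card : ℝ) * (1 / Real.cosh (θ/2)) ^ N := hsum2
    _ ≤ ((n : ℝ) - ∑ i ∈ Finset.range n, (1 : ℝ) / (i + 1)) * (n.factorial : ℝ) *
          (1 / Real.cosh (θ/2)) ^ N := by
        apply mul_le_mul_of_nonneg_right hcard (by positivity)
    _ = ((n : ℝ) - ∑ i ∈ Finset.range n, (1 : ℝ) / (i + 1)) * (n.factorial : ℝ) *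
          (Real.cosh (θ / 2)) ^ (-(N : ℤ)) := by rw [hzpow]
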